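/- The Cayley table of the cyclic group ℤ/2m (m ≥ 1) admits no transversal; more generally it admits no k-weight for odd k, and in particular no k-plex for any odd k. -/

import Mathlib

/-- A `k`-weight of the Cayley table of an additive group `G`
(the latin square with symbol `x + y` in cell `(x, y)`):
all row, column, and symbol sums equal `k`. -/
def IsCayleyWeight {G : Type*} [AddCommGroup G] [Fintype G] (θ : G × G → ℤ) (k : ℤ) : Prop :=
  (∀ x : G, ∑ y : G, θ (x, y) = k) ∧ (∀ y : G, ∑ x : G, θ (x, y) = k) ∧
  (∀ z : G, ∑ x : G, θ (x, z - x) = k)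

/-- A `k`-plex of the Cayley table of `G`: a set of cells meeting each row,
column, and symbol exactly `k` times. -/
def IsCayleyPlex {G : Type*} [AddCommGroup G] [Fintype G] [DecidableEq G]
    (P : Finset (G × G)) (k : ℕ) : Prop :=
  (∀ x : G, (P.filter fun p => p.1 = x).card = k) ∧
  (∀ y : G, (P.filter fun p => p.2 = y).card = k) ∧
  (∀ z : G, (P.filter fun p => p.1 + p.2 = z).card = k)

lemma sum_zmod_range (n : ℕ) [NeZero n] :
    ∑ x : ZMod n, x = ∑ i ∈ Finset.range n, (i : ZMod n) := by
  refine Finset.sum_nbij' (fun x => ZMod.val x) (fun i => (i : ZMod n)) ?_ ?_ ?_ ?_ ?_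
  · intro x _; exact Finset.mem_range.mpr (ZMod.val_lt x)
  · intro i _; exact Finset.mem_univ _
  · intro x _; exact ZMod.natCast_rightInverse x
  · intro i hi; exact ZMod.val_cast_of_lt (Finset.mem_range.mp hi)
  · intro x _; exact (ZMod.natCast_rightInverse x).symm

lemma sum_zmod_eq (m : ℕ) (hm : 1 ≤ m) [NeZero m] :
    ∑ x : ZMod (2 * m), x = (m : ZMod (2 * m)) := by
  haveI : NeZero (2 * m) := ⟨by omega⟩
  rw [sum_zmod_range, ← Nat.cast_sum]
  have h : ∑ i ∈ Finset.range (2 * m), i = m * (2 * m - 1) := by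
    have h2 := Finset.sum_range_id_mul_two (2 * m)
    have h3 : (m * (2 * m - 1)) * 2 = 2 * m * (2 * m - 1) := by ring
    omega
  have hmm : ((2 * m : ℕ) : ZMod (2 * m)) = 0 := ZMod.natCast_self _
  rw [h]
  push_cast [Nat.cast_sub (by omega : 1 ≤ 2 * m)] at *
  linear_combination (m - 1 : ZMod (2*m)) * hmm

lemma m_ne_zero (m : ℕ) (hm : 1 ≤ m) [NeZero m] : (m : ZMod (2 * m)) ≠ 0 := by
  haveI : NeZero (2 * m) := ⟨by omega⟩
  intro h
  have := (ZMod.natCast_eq_zero_iff m (2 * m)).mp h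
  have := Nat.le_of_dvd (by omega) this
  omega

lemma weight_core {G : Type*} [AddCommGroup G] [Fintype G] (θ : G × G → ℤ) (k : ℤ)
    (h : IsCayleyWeight θ k) : k • (∑ x : G, x) = 0 := by
  obtain ⟨h1, h2, h3⟩ := h
  set T : G := ∑ x : G, x with hT
  have key : (∑ x : G, ∑ y : G, θ (x, y) • (x + y)) = k • T := by
    have step : ∀ x : G, ∑ y : G, θ (x, y) • (x + y) = ∑ z : G, θ (x, z - x) • z := by
      intro x
      refine Fintype.sum_equiv (Equiv.addLeft x) _ _ ?_
      intro y
      simp [Equiv.addLeft]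
    simp_rw [step]
    rw [Finset.sum_comm]
    calc ∑ z : G, ∑ x : G, θ (x, z - x) • z
        = ∑ z : G, (∑ x : G, θ (x, z - x)) • z := by simp_rw [Finset.sum_smul]
      _ = ∑ z : G, k • z := by simp_rw [h3]
      _ = k • T := (Finset.smul_sum).symm
  have key2 : (∑ x : G, ∑ y : G, θ (x, y) • (x + y)) = k • T + k • T := by
    simp_rw [smul_add, Finset.sum_add_distrib]
    congr 1
    · calc ∑ x : G, ∑ y : G, θ (x, y) • x
          = ∑ x : G, (∑ y : G, θ (x, y)) • x := by simp_rw [Finset.sum_smul]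
        _ = ∑ x : G, k • x := by simp_rw [h1]
        _ = k • T := (Finset.smul_sum).symm
    · rw [Finset.sum_comm]
      calc ∑ y : G, ∑ x : G, θ (x, y) • y
          = ∑ y : G, (∑ x : G, θ (x, y)) • y := by simp_rw [Finset.sum_smul]
        _ = ∑ y : G, k • y := by simp_rw [h2]
        _ = k • T := (Finset.smul_sum).symm
  exact left_eq_add.mp (key.symm.trans key2)

lemma no_odd_weight (m : ℕ) (hm : 1 ≤ m) [NeZero m] (k : ℤ) (hk : Odd k)
    (θ : ZMod (2 * m) × ZMod (2 * m) → ℤ) (h : IsCayleyWeight θ k) : False := by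
  have hc := weight_core θ k h
  rw [sum_zmod_eq m hm] at hc
  obtain ⟨t, rfl⟩ := hk
  have h2 : (2 : ℤ) • (m : ZMod (2 * m)) = 0 := by
    have : ((2 * m : ℕ) : ZMod (2 * m)) = 0 := ZMod.natCast_self _
    push_cast at this
    rw [two_smul]
    linear_combination this
  rw [add_smul, mul_smul, smul_comm, h2, smul_zero, zero_add, one_smul] at hc
  exact m_ne_zero m hm hc

lemma plex_weight {G : Type*} [AddCommGroup G] [Fintype G] [DecidableEq G]
    (P : Finset (G × G)) (k : ℕ) (h : IsCayleyPlex P k) :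
    IsCayleyWeight (fun p => if p ∈ P then (1 : ℤ) else 0) (k : ℤ) := by
  obtain ⟨p1, p2, p3⟩ := h
  refine ⟨fun x => ?_, fun y => ?_, fun z => ?_⟩
  · rw [show (∑ y : G, if (x, y) ∈ P then (1:ℤ) else 0)
        = ((Finset.univ.filter fun y : G => (x, y) ∈ P).card : ℤ) from by
      simp [Finset.sum_boole]]
    rw [← p1 x]
    congr 1
    refine Finset.card_nbij' (fun y => (x, y)) (fun p => p.2) ?_ ?_ ?_ ?_
    · intro y hy
      simp only [Finset.mem_coe, Finset.mem_filter, Finset.mem_univ, true_and] at hy ⊢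
      exact ⟨hy, trivial⟩
    · intro p hp
      simp only [Finset.mem_coe, Finset.mem_filter] at hp
      simp only [Finset.mem_coe, Finset.mem_filter, Finset.mem_univ, true_and]
      rw [show (x, p.2) = p from by rw [← hp.2]]
      exact hp.1
    · intro y _; rfl
    · intro p hp
      simp only [Finset.mem_coe, Finset.mem_filter] at hp
      rw [← hp.2]
  · rw [show (∑ x : G, if (x, y) ∈ P then (1:ℤ) else 0)
        = ((Finset.univ.filter fun x : G => (x, y) ∈ P).card : ℤ) from by
      simp [Finset.sum_boole]]
    rw [← p2 y]
    congr 1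
    refine Finset.card_nbij' (fun x => (x, y)) (fun p => p.1) ?_ ?_ ?_ ?_
    · intro x hx
      simp only [Finset.mem_coe, Finset.mem_filter, Finset.mem_univ, true_and] at hx ⊢
      exact ⟨hx, trivial⟩
    · intro p hp
      simp only [Finset.mem_coe, Finset.mem_filter] at hp
      simp only [Finset.mem_coe, Finset.mem_filter, Finset.mem_univ, true_and]
      rw [show (p.1, y) = p from by rw [← hp.2]]
      exact hp.1
    · intro x _; rfl
    · intro p hp
      simp only [Finset.mem_coe, Finset.mem_filter] at hp
      rw [← hp.2]
  · rw [show (∑ x : G, if (x, z - x) ∈ P then (1:ℤ) else 0)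
        = ((Finset.univ.filter fun x : G => (x, z - x) ∈ P).card : ℤ) from by
      simp [Finset.sum_boole]]
    rw [← p3 z]
    congr 1
    refine Finset.card_nbij' (fun x => (x, z - x)) (fun p => p.1) ?_ ?_ ?_ ?_
    · intro x hx
      simp only [Finset.mem_coe, Finset.mem_filter, Finset.mem_univ, true_and] at hx ⊢
      exact ⟨hx, by abel⟩
    · intro p hp
      simp only [Finset.mem_coe, Finset.mem_filter] at hp
      simp only [Finset.mem_coe, Finset.mem_filter, Finset.mem_univ, true_and]
      rw [show (p.1, z - p.1) = p from by
        rw [show z - p.1 = p.2 from by rw [← hp.2]; abel]]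
      exact hp.1
    · intro x _; rfl
    · intro p hp
      simp only [Finset.mem_coe, Finset.mem_filter] at hp
      show (p.1, z - p.1) = p
      rw [show z - p.1 = p.2 from by rw [← hp.2]; abel]

theorem zmod_even_no_transversal_no_odd_weight_no_odd_plex (m : ℕ) (hm : 1 ≤ m)
    [NeZero m] :
    (¬ ∃ σ : Equiv.Perm (ZMod (2 * m)), Function.Bijective fun x => x + σ x) ∧
    (∀ k : ℤ, Odd k → ¬ ∃ θ : ZMod (2 * m) × ZMod (2 * m) → ℤ, IsCayleyWeight θ k) ∧
    (∀ k : ℕ, Odd k → ¬ ∃ P : Finset (ZMod (2 * m) × ZMod (2 * m)), IsCayleyPlex P k) := by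
  haveI : NeZero (2 * m) := ⟨by omega⟩
  refine ⟨?_, ?_, ?_⟩
  · rintro ⟨σ, hσ⟩
    have h1 : ∑ x : ZMod (2 * m), (x + σ x) = ∑ z : ZMod (2 * m), z :=
      Fintype.sum_bijective _ hσ _ _ (fun x => rfl)
    have h2 : ∑ x : ZMod (2 * m), (x + σ x)
        = (∑ x : ZMod (2 * m), x) + ∑ x : ZMod (2 * m), σ x := Finset.sum_add_distrib
    have h3 : ∑ x : ZMod (2 * m), σ x = ∑ x : ZMod (2 * m), x :=
      Fintype.sum_bijective σ σ.bijective _ _ (fun x => rfl)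
    rw [h2, h3, sum_zmod_eq m hm] at h1
    have h4 : ((2 * m : ℕ) : ZMod (2 * m)) = 0 := ZMod.natCast_self _
    push_cast at h4
    have : (m : ZMod (2 * m)) = 0 := by linear_combination h4 - h1
    exact m_ne_zero m hm this
  · rintro k hk ⟨θ, hθ⟩
    exact no_odd_weight m hm k hk θ hθ
  · rintro k hk ⟨P, hP⟩
    exact no_odd_weight m hm (k : ℤ) (by exact_mod_cast hk) _
      (plex_weight P k hP)
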